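/- Let A and B be unital C*-algebras and let T : A_sa → B_sa be a real-linear bijection between their selfadjoint parts. Then T is an order isomorphism if and only if there exist a positive invertible element y ∈ B and a Jordan isomorphism J : A_sa → B_sa such that T(x) = y·J(x)·y for all x ∈ A_sa. Moreover, this decomposition is unique, and necessarily y = (T1)^{1/2}, the positive square root of T(1). -/

import Mathlib

/-- `J` is a Jordan isomorphism between the selfadjoint parts of the unital C*-algebras
`A` and `B`: a real-linear bijection `A_sa → B_sa` preserving the Jordan product
`x ∘ y = (xy + yx)/2`. -/
def IsJordanIsoSa {A B : Type*} [CStarAlgebra A] [CStarAlgebra B] (J : A → B) : Prop :=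
  Set.BijOn J {x : A | IsSelfAdjoint x} {y : B | IsSelfAdjoint y} ∧
    (∀ x y : A, IsSelfAdjoint x → IsSelfAdjoint y → J (x + y) = J x + J y) ∧
    (∀ (t : ℝ) (x : A), IsSelfAdjoint x → J (t • x) = t • J x) ∧
    (∀ x y : A, IsSelfAdjoint x → IsSelfAdjoint y →
      J ((2 : ℝ)⁻¹ • (x * y + y * x)) = (2 : ℝ)⁻¹ • (J x * J y + J y * J x))


namespace OIK


open Finset in
noncomputable def hatFn (u : ℝ) : ℝ := max 0 (1 - |u|)

lemma hatFn_nonneg (u : ℝ) : 0 ≤ hatFn u := le_max_left _ _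

lemma hatFn_cont : Continuous hatFn :=
  continuous_const.max (continuous_const.sub continuous_abs)

lemma hatFn_eq_zero {u : ℝ} (h : 1 ≤ |u|) : hatFn u = 0 :=
  max_eq_left (by linarith)

lemma hatFn_eq {u : ℝ} (h : |u| ≤ 1) : hatFn u = 1 - |u| :=
  max_eq_right (by linarith)

open Finset in
lemma hat_sum_one (n : ℕ) (s : ℝ) (h0 : 0 ≤ s) (hn : s ≤ n) :
    ∑ i ∈ Finset.range (n+1), hatFn (s - i) = 1 := by
  induction n with
  | zero =>
    have hs : s = 0 := le_antisymm (by exact_mod_cast hn) h0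
    simp [hs, hatFn]
  | succ n ih =>
    rw [Finset.sum_range_succ]
    by_cases hs : s ≤ n
    · rw [ih hs]
      have : hatFn (s - (n+1 : ℕ)) = 0 := by
        apply hatFn_eq_zero
        rw [le_abs]
        right
        push_cast
        linarith
      rw [this]; ring
    · push_neg at hs
      rw [Finset.sum_range_succ]
      have hzero : ∀ i ∈ Finset.range n, hatFn (s - i) = 0 := by
        intro i hi
        have hi' : (i : ℝ) ≤ (n : ℝ) - 1 := by
          have := Finset.mem_range.mp hi
          have : (i : ℝ) + 1 ≤ n := by exact_mod_cast this
          linarith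
        exact hatFn_eq_zero (le_abs.mpr (Or.inl (by linarith)))
      rw [Finset.sum_eq_zero hzero]
      have hsn : s ≤ (n : ℝ) + 1 := by exact_mod_cast hn
      have h1 : hatFn (s - n) = 1 - (s - n) := by
        rw [hatFn_eq (by rw [abs_of_nonneg (by linarith)]; linarith),
          abs_of_nonneg (by linarith)]
      have h2 : hatFn (s - (n+1 : ℕ)) = 1 - ((n : ℝ) + 1 - s) := by
        push_cast
        rw [hatFn_eq (by rw [abs_of_nonpos (by linarith)]; linarith),
          abs_of_nonpos (by linarith)]
        ring
      rw [h1, h2]; push_cast; ring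

open Finset in
lemma hat_sum_id (n : ℕ) (s : ℝ) (h0 : 0 ≤ s) (hn : s ≤ n) :
    ∑ i ∈ Finset.range (n+1), (i : ℝ) * hatFn (s - i) = s := by
  induction n with
  | zero =>
    have hs : s = 0 := le_antisymm (by exact_mod_cast hn) h0
    simp [hs, hatFn]
  | succ n ih =>
    rw [Finset.sum_range_succ]
    by_cases hs : s ≤ n
    · rw [ih hs]
      have : hatFn (s - (n+1 : ℕ)) = 0 := by
        apply hatFn_eq_zero
        rw [le_abs]
        right
        push_cast
        linarith
      rw [this]; ring
    · push_neg at hs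
      rw [Finset.sum_range_succ]
      have hzero : ∀ i ∈ Finset.range n, (i : ℝ) * hatFn (s - i) = 0 := by
        intro i hi
        have hi' : (i : ℝ) ≤ (n : ℝ) - 1 := by
          have := Finset.mem_range.mp hi
          have : (i : ℝ) + 1 ≤ n := by exact_mod_cast this
          linarith
        rw [hatFn_eq_zero (le_abs.mpr (Or.inl (by linarith)))]; ring
      rw [Finset.sum_eq_zero hzero]
      have hsn : s ≤ (n : ℝ) + 1 := by exact_mod_cast hn
      have h1 : hatFn (s - n) = 1 - (s - n) := by
        rw [hatFn_eq (by rw [abs_of_nonneg (by linarith)]; linarith),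
          abs_of_nonneg (by linarith)]
      have h2 : hatFn (s - (n+1 : ℕ)) = 1 - ((n : ℝ) + 1 - s) := by
        push_cast
        rw [hatFn_eq (by rw [abs_of_nonpos (by linarith)]; linarith),
          abs_of_nonpos (by linarith)]
        ring
      rw [h1, h2]; push_cast; ring

-- real-level key facts
lemma key_real (n : ℕ) (r δ : ℝ) (hr : 0 < r) (hδ : δ = 2*r/n) (hn : 1 ≤ n)
    (t : ℝ) (ht : |t| ≤ r) :
    (∑ i ∈ Finset.range (n+1), hatFn ((t+r)/δ - i) = 1) ∧
    (∑ i ∈ Finset.range (n+1), (-r + δ*i) * hatFn ((t+r)/δ - i) = t) ∧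
    (∑ i ∈ Finset.range (n+1), (-r + δ*i)^2 * hatFn ((t+r)/δ - i) ≤ t^2 + δ^2) := by
  have hnpos : (0:ℝ) < n := by exact_mod_cast hn
  have hδpos : 0 < δ := by rw [hδ]; positivity
  set s := (t + r)/δ with hs
  have habs := abs_le.mp ht
  have h0 : 0 ≤ s := by apply div_nonneg _ hδpos.le; linarith
  have hsn : s ≤ n := by
    rw [hs, div_le_iff₀ hδpos, hδ]
    field_simp
    linarith
  have H1 := hat_sum_one n s h0 hsn
  have H2 := hat_sum_id n s h0 hsn
  refine ⟨H1, ?_, ?_⟩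
  · have : ∑ i ∈ Finset.range (n+1), (-r + δ*i) * hatFn (s - i)
        = -r * ∑ i ∈ Finset.range (n+1), hatFn (s - i)
          + δ * ∑ i ∈ Finset.range (n+1), (i:ℝ) * hatFn (s - i) := by
      rw [Finset.mul_sum, Finset.mul_sum, ← Finset.sum_add_distrib]
      exact Finset.sum_congr rfl fun i _ => by ring
    rw [this, H1, H2, hs]
    field_simp
    ring
  · have H3 : ∑ i ∈ Finset.range (n+1), (-r + δ*i) * hatFn (s - i) = t := by
      have : ∑ i ∈ Finset.range (n+1), (-r + δ*i) * hatFn (s - i)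
          = -r * ∑ i ∈ Finset.range (n+1), hatFn (s - i)
            + δ * ∑ i ∈ Finset.range (n+1), (i:ℝ) * hatFn (s - i) := by
        rw [Finset.mul_sum, Finset.mul_sum, ← Finset.sum_add_distrib]
        exact Finset.sum_congr rfl fun i _ => by ring
      rw [this, H1, H2, hs]
      field_simp
      ring
    have hterm : ∀ i ∈ Finset.range (n+1),
        (-r + δ*i)^2 * hatFn (s - i)
          ≤ δ^2 * hatFn (s - i) + 2*t*((-r + δ*i) * hatFn (s - i))
            - t^2 * hatFn (s - i) := by
      intro i _
      have hlam : (-r + δ*i) - t = δ * ((i:ℝ) - s) := by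
        rw [hs]; field_simp; ring
      by_cases hcase : 1 ≤ |s - (i:ℝ)|
      · rw [hatFn_eq_zero hcase]; ring_nf; exact le_refl _
      · push_neg at hcase
        have h1 : ((-r + δ*i) - t)^2 ≤ δ^2 := by
          rw [hlam]
          have : ((i:ℝ) - s)^2 ≤ 1 := by
            nlinarith [abs_nonneg (s - (i:ℝ)), sq_abs (s - (i:ℝ)), hcase.le,
              sq_abs ((i:ℝ) - s), abs_sub_comm s (i:ℝ)]
          nlinarith [sq_nonneg δ]
        have := hatFn_nonneg (s - i)
        nlinarith [mul_le_mul_of_nonneg_right h1 this]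
    calc ∑ i ∈ Finset.range (n+1), (-r + δ*i)^2 * hatFn (s - i)
        ≤ ∑ i ∈ Finset.range (n+1),
            (δ^2 * hatFn (s - i) + 2*t*((-r + δ*i) * hatFn (s - i))
              - t^2 * hatFn (s - i)) := Finset.sum_le_sum hterm
      _ = δ^2 * ∑ i ∈ Finset.range (n+1), hatFn (s - i)
          + 2*t*(∑ i ∈ Finset.range (n+1), (-r + δ*i) * hatFn (s - i))
          - t^2 * ∑ i ∈ Finset.range (n+1), hatFn (s - i) := by
          rw [Finset.sum_sub_distrib, Finset.sum_add_distrib,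
            Finset.mul_sum, Finset.mul_sum, Finset.mul_sum]
      _ = t^2 + δ^2 := by rw [H1, H3]; ring


section helpers2
variable {B : Type*} [CStarAlgebra B] [PartialOrder B] [StarOrderedRing B]

lemma sa_sum {ι : Type*} (s : Finset ι) (g : ι → B)
    (h : ∀ i ∈ s, IsSelfAdjoint (g i)) : IsSelfAdjoint (∑ i ∈ s, g i) := by
  rw [isSelfAdjoint_iff, star_sum]
  exact Finset.sum_congr rfl h

lemma my_smul_nonneg {r : ℝ} (hr : 0 ≤ r) {z : B} (hz : 0 ≤ z) : 0 ≤ r • z := by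
  have key : r • z = (Real.sqrt r • (1:B)) * z * (Real.sqrt r • (1:B)) := by
    rw [smul_mul_assoc, mul_smul_comm, one_mul, mul_one, smul_smul,
      Real.mul_self_sqrt hr]
  rw [key]
  exact IsSelfAdjoint.conjugate_nonneg hz
    ((IsSelfAdjoint.all (Real.sqrt r)).smul (IsSelfAdjoint.one B))

lemma le_of_forall_eps {a b : B} (h : ∀ ε : ℝ, 0 < ε → a ≤ b + ε • 1) : a ≤ b := by
  have htend : Filter.Tendsto (fun ε : ℝ => b + ε • (1:B)) (nhdsWithin 0 (Set.Ioi 0))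
      (nhds b) := by
    have : Filter.Tendsto (fun ε : ℝ => b + ε • (1:B)) (nhds 0) (nhds (b + (0:ℝ) • 1)) :=
      tendsto_const_nhds.add ((continuous_id.smul continuous_const).tendsto 0)
    simpa using this.mono_left nhdsWithin_le_nhds
  exact ge_of_tendsto htend (Filter.eventually_of_mem self_mem_nhdsWithin fun ε hε => h ε hε)

open Finset in
lemma jensen_sq {ι : Type*} (s : Finset ι) (q : ι → B) (lam : ι → ℝ)
    (hq : ∀ i ∈ s, 0 ≤ q i) (hsum : ∑ i ∈ s, q i = 1) :
    (∑ i ∈ s, lam i • q i) * (∑ i ∈ s, lam i • q i) ≤ ∑ i ∈ s, (lam i)^2 • q i := by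
  set b := ∑ i ∈ s, lam i • q i with hb
  have hbsa : IsSelfAdjoint b :=
    sa_sum s _ fun i hi => (IsSelfAdjoint.all (lam i)).smul (.of_nonneg (hq i hi))
  have key : ∑ i ∈ s, (lam i • 1 - b) * q i * (lam i • 1 - b)
      = (∑ i ∈ s, (lam i)^2 • q i) - b * b := by
    have expand : ∀ i ∈ s, (lam i • 1 - b) * q i * (lam i • 1 - b)
        = (lam i)^2 • q i - b * (lam i • q i) - (lam i • q i) * b + b * (q i * b) := by
      intro i _
      simp only [sub_mul, mul_sub, smul_mul_assoc, mul_smul_comm, one_mul, mul_one,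
        smul_sub, smul_smul, ← pow_two, mul_assoc]
      abel
    rw [Finset.sum_congr rfl expand]
    have e1 : ∑ i ∈ s, b * (lam i • q i) = b * b := by rw [← Finset.mul_sum, ← hb]
    have e2 : ∑ i ∈ s, (lam i • q i) * b = b * b := by rw [← Finset.sum_mul, ← hb]
    have e3 : ∑ i ∈ s, b * (q i * b) = b * b := by
      rw [← Finset.mul_sum, ← Finset.sum_mul, hsum, one_mul]
    calc ∑ i ∈ s, ((lam i)^2 • q i - b * (lam i • q i) - (lam i • q i) * b + b * (q i * b))
        = (∑ i ∈ s, (lam i)^2 • q i) - (∑ i ∈ s, b * (lam i • q i))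
          - (∑ i ∈ s, (lam i • q i) * b) + ∑ i ∈ s, b * (q i * b) := by
          rw [Finset.sum_add_distrib, Finset.sum_sub_distrib, Finset.sum_sub_distrib]
      _ = (∑ i ∈ s, (lam i)^2 • q i) - b * b := by rw [e1, e2, e3]; abel
  have pos : 0 ≤ ∑ i ∈ s, (lam i • 1 - b) * q i * (lam i • 1 - b) := by
    refine Finset.sum_nonneg fun i hi => ?_
    have hc : IsSelfAdjoint (lam i • (1:B) - b) :=
      ((IsSelfAdjoint.all (lam i)).smul (IsSelfAdjoint.one B)).sub hbsa
    exact IsSelfAdjoint.conjugate_nonneg (hq i hi) hc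
  rw [key] at pos
  exact sub_nonneg.mp pos
end helpers2


lemma half_smul {M : Type*} [AddCommGroup M] [Module ℝ M] (w : M) :
    (2 : ℝ)⁻¹ • (w + w) = w := by
  rw [← two_smul ℝ w, smul_smul]
  norm_num

lemma sa_mul_self' {A : Type*} [CStarAlgebra A] {x : A} (hx : IsSelfAdjoint x) :
    IsSelfAdjoint (x * x) := by
  rw [isSelfAdjoint_iff, star_mul, hx.star_eq]

variable {A B : Type*} [CStarAlgebra A] [CStarAlgebra B]

lemma jordan_sq {J : A → B}
    (hmul : ∀ x y : A, IsSelfAdjoint x → IsSelfAdjoint y →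
      J ((2 : ℝ)⁻¹ • (x * y + y * x)) = (2 : ℝ)⁻¹ • (J x * J y + J y * J x))
    {u : A} (hu : IsSelfAdjoint u) : J (u * u) = J u * J u := by
  have h := hmul u u hu hu
  rwa [half_smul (u*u), half_smul (J u * J u)] at h

lemma jordan_one {J : A → B} (hJ : IsJordanIsoSa J) : J 1 = 1 := by
  obtain ⟨hbij, hadd, hsmul, hmul⟩ := hJ
  set e := J 1 with he
  have hesa : IsSelfAdjoint e := hbij.mapsTo (show (1:A) ∈ _ from IsSelfAdjoint.one A)
  have hR : ∀ b : B, IsSelfAdjoint b → e * b + b * e = b + b := by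
    intro b hb
    obtain ⟨u, hu, hJu⟩ := hbij.surjOn (show b ∈ {y : B | IsSelfAdjoint y} from hb)
    have hu' : IsSelfAdjoint u := hu
    have h := hmul 1 u (IsSelfAdjoint.one A) hu'
    rw [one_mul, mul_one, half_smul u, hJu] at h
    -- h : b = 2⁻¹ • (e * b + b * e)
    have h2 : (2:ℝ) • b = (2:ℝ) • ((2:ℝ)⁻¹ • (e * b + b * e)) := congrArg _ h
    rw [smul_smul] at h2
    norm_num at h2
    rw [two_smul] at h2
    exact h2.symm
  have hee : e * e = e := by
    have h1 := hR e hesa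
    have : (2:ℝ) • (e*e) = (2:ℝ) • e := by rw [two_smul, two_smul]; exact h1
    exact smul_right_injective B two_ne_zero this
  have heb : ∀ b : B, IsSelfAdjoint b → e * b = b := by
    intro b hb
    have h1 := hR b hb
    have hl : e * (e*b) + e * (b*e) = e*b + e*b := by
      rw [← mul_add, h1, mul_add]
    rw [← mul_assoc, ← mul_assoc, hee] at hl
    have hebe1 : e*b*e = e*b := add_left_cancel hl
    have hr' : (e*b)*e + (b*e)*e = b*e + b*e := by
      rw [← add_mul, h1, add_mul]
    rw [mul_assoc b e e, hee] at hr'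
    have hebe2 : e*b*e = b*e := add_right_cancel hr'
    have hcomm : e*b = b*e := by rw [← hebe1, hebe2]
    have h2 : (2:ℝ) • (e*b) = (2:ℝ) • b := by
      rw [two_smul, two_smul]
      nth_rewrite 2 [hcomm]
      exact h1
    exact smul_right_injective B two_ne_zero h2
  have := heb 1 (IsSelfAdjoint.one B)
  rwa [mul_one] at this


section maps
variable {A B : Type*} [CStarAlgebra A] [PartialOrder A] [StarOrderedRing A]
  [CStarAlgebra B] [PartialOrder B] [StarOrderedRing B]
  (Φ : A → B)
  (hadd : ∀ x y : A, IsSelfAdjoint x → IsSelfAdjoint y → Φ (x+y) = Φ x + Φ y)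
  (hsmul : ∀ (t : ℝ) (x : A), IsSelfAdjoint x → Φ (t • x) = t • Φ x)

include hsmul in
lemma map_zero' : Φ 0 = 0 := by
  have := hsmul 0 0 (IsSelfAdjoint.zero A)
  simpa using this

include hadd hsmul in
lemma map_sub' (x y : A) (hx : IsSelfAdjoint x) (hy : IsSelfAdjoint y) :
    Φ (x - y) = Φ x - Φ y := by
  have h1 : Φ (x + (-1 : ℝ) • y) = Φ x + (-1 : ℝ) • Φ y := by
    rw [hadd x ((-1:ℝ) • y) hx ((IsSelfAdjoint.all (-1 : ℝ)).smul hy), hsmul]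
    exact hy
  simpa [sub_eq_add_neg] using h1

include hadd hsmul in
lemma mono' (hpos : ∀ x : A, IsSelfAdjoint x → 0 ≤ x → 0 ≤ Φ x)
    (x y : A) (hx : IsSelfAdjoint x) (hy : IsSelfAdjoint y) (hxy : x ≤ y) :
    Φ x ≤ Φ y := by
  have h1 : 0 ≤ Φ (y - x) := hpos _ (hy.sub hx) (sub_nonneg.mpr hxy)
  rw [map_sub' Φ hadd hsmul y x hy hx] at h1
  exact sub_nonneg.mp h1

include hadd hsmul in
lemma map_sum' {ι : Type*} (s : Finset ι) (g : ι → A)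
    (hg : ∀ i ∈ s, IsSelfAdjoint (g i)) :
    Φ (∑ i ∈ s, g i) = ∑ i ∈ s, Φ (g i) := by
  classical
  induction s using Finset.induction_on with
  | empty => simpa using map_zero' Φ hsmul
  | insert a s' hnotmem ih =>
    rw [Finset.sum_insert hnotmem, Finset.sum_insert hnotmem,
      hadd _ _ (hg a (Finset.mem_insert_self a s'))
        (sa_sum s' g fun i hi => hg i (Finset.mem_insert_of_mem hi)),
      ih fun i hi => hg i (Finset.mem_insert_of_mem hi)]

include hadd hsmul in
theorem kadison_ineq (hone : Φ 1 = 1)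
    (hpos : ∀ x : A, IsSelfAdjoint x → 0 ≤ x → 0 ≤ Φ x)
    {x : A} (hx : IsSelfAdjoint x) : Φ x * Φ x ≤ Φ (x * x) := by
  have honeB : (0 : B) ≤ 1 := by simpa using star_mul_self_nonneg (1 : B)
  obtain hA | hA := subsingleton_or_nontrivial A
  · rw [Subsingleton.elim x 1, mul_one, hone, mul_one]
  apply le_of_forall_eps
  intro ε hε
  set r : ℝ := ‖x‖ + 1 with hr
  have hrpos : 0 < r := by positivity
  obtain ⟨n, hn⟩ := exists_nat_ge (max 1 (2*r/Real.sqrt ε))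
  have hn1 : 1 ≤ n := by exact_mod_cast le_trans (le_max_left _ _) hn
  have hnpos : (0:ℝ) < n := by exact_mod_cast hn1
  set δ : ℝ := 2*r/n with hδ
  have hδpos : 0 < δ := by rw [hδ]; positivity
  have hδε : δ^2 ≤ ε := by
    have hsq : 0 < Real.sqrt ε := Real.sqrt_pos.mpr hε
    have h2 : 2*r/Real.sqrt ε ≤ n := le_trans (le_max_right _ _) hn
    have hδle : δ ≤ Real.sqrt ε := by
      rw [hδ, div_le_iff₀ hnpos]
      rw [div_le_iff₀ hsq] at h2
      linarith [mul_comm (Real.sqrt ε) (n:ℝ)]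
    calc δ^2 ≤ (Real.sqrt ε)^2 := by nlinarith [hδpos.le]
      _ = ε := Real.sq_sqrt hε.le
  set e : ℕ → ℝ → ℝ := fun i t => hatFn ((t+r)/δ - i) with he
  set lam : ℕ → ℝ := fun i => -r + δ*i with hlam
  have hecont : ∀ i, Continuous (e i) := fun i =>
    hatFn_cont.comp (((continuous_id.add continuous_const).div_const δ).sub
      continuous_const)
  have hspec : ∀ t ∈ spectrum ℝ x, |t| ≤ r := by
    intro t ht
    have := spectrum.norm_le_norm_of_mem ht
    rw [Real.norm_eq_abs] at this
    linarith
  set p : ℕ → A := fun i => cfc (e i) x with hp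
  have hpnn : ∀ i, 0 ≤ p i := fun i => cfc_nonneg fun t _ => hatFn_nonneg _
  have hpsa : ∀ i, IsSelfAdjoint (p i) := fun i => .of_nonneg (hpnn i)
  have P1 : ∑ i ∈ Finset.range (n+1), p i = 1 := by
    rw [hp]
    rw [← cfc_sum (fun i => e i) x (Finset.range (n+1))
      (fun i _ => (hecont i).continuousOn)]
    rw [show cfc (∑ i ∈ Finset.range (n+1), e i) x = cfc (fun _ : ℝ => (1:ℝ)) x from
      cfc_congr fun t ht => by
        simpa [Finset.sum_apply] using (key_real n r δ hrpos hδ hn1 t (hspec t ht)).1]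
    rw [cfc_const 1 x hx]
    exact map_one (algebraMap ℝ A)
  have P2 : ∑ i ∈ Finset.range (n+1), lam i • p i = x := by
    rw [hp]
    rw [Finset.sum_congr rfl (fun i (_ : i ∈ Finset.range (n+1)) =>
      (cfc_const_mul (lam i) (e i) x ((hecont i).continuousOn)).symm),
      ← cfc_sum (fun i t => lam i * e i t) x (Finset.range (n+1))
        (fun i _ => (continuous_const.mul (hecont i)).continuousOn)]
    rw [show cfc (∑ i ∈ Finset.range (n+1), fun t => lam i * e i t) x
        = cfc (id : ℝ → ℝ) x from
      cfc_congr fun t ht => by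
        simpa [Finset.sum_apply] using (key_real n r δ hrpos hδ hn1 t (hspec t ht)).2.1]
    exact cfc_id ℝ x hx
  have P3 : ∑ i ∈ Finset.range (n+1), (lam i)^2 • p i ≤ x * x + δ^2 • 1 := by
    rw [hp]
    rw [Finset.sum_congr rfl (fun i (_ : i ∈ Finset.range (n+1)) =>
      (cfc_const_mul ((lam i)^2) (e i) x ((hecont i).continuousOn)).symm),
      ← cfc_sum (fun i t => (lam i)^2 * e i t) x (Finset.range (n+1))
        (fun i _ => (continuous_const.mul (hecont i)).continuousOn)]
    have hcont1 : ContinuousOn (∑ i ∈ Finset.range (n+1), fun t => (lam i)^2 * e i t)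
        (spectrum ℝ x) := by
      rw [Finset.sum_fn]
      exact continuousOn_finset_sum _ fun i _ =>
        (continuous_const.mul (hecont i)).continuousOn
    have step : cfc (∑ i ∈ Finset.range (n+1), fun t => (lam i)^2 * e i t) x
        ≤ cfc (fun t : ℝ => t^2 + δ^2) x := by
      apply cfc_mono
      · intro t ht
        simpa [Finset.sum_apply] using (key_real n r δ hrpos hδ hn1 t (hspec t ht)).2.2
      · exact hcont1
      · exact ((continuous_pow 2).add continuous_const).continuousOn
    refine le_trans step (le_of_eq ?_)
    rw [cfc_add_const (δ^2) (fun t : ℝ => t^2) x ((continuous_pow 2).continuousOn) hx]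
    congr 1
    · rw [show (fun t : ℝ => t^2) = fun t : ℝ => (id t)^2 from rfl,
        cfc_pow (id : ℝ → ℝ) 2 x continuousOn_id hx, cfc_id ℝ x hx, sq]
    · rw [Algebra.algebraMap_eq_smul_one]
  set q : ℕ → B := fun i => Φ (p i) with hq
  have hqnn : ∀ i ∈ Finset.range (n+1), 0 ≤ q i := fun i _ => hpos _ (hpsa i) (hpnn i)
  have Q1 : ∑ i ∈ Finset.range (n+1), q i = 1 := by
    rw [hq, ← map_sum' Φ hadd hsmul _ _ (fun i _ => hpsa i), P1, hone]
  have Qb : ∑ i ∈ Finset.range (n+1), lam i • q i = Φ x := by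
    calc ∑ i ∈ Finset.range (n+1), lam i • q i
        = ∑ i ∈ Finset.range (n+1), Φ (lam i • p i) :=
          Finset.sum_congr rfl fun i _ => (hsmul (lam i) (p i) (hpsa i)).symm
      _ = Φ (∑ i ∈ Finset.range (n+1), lam i • p i) :=
          (map_sum' Φ hadd hsmul _ _ fun i _ =>
            (IsSelfAdjoint.all (lam i)).smul (hpsa i)).symm
      _ = Φ x := by rw [P2]
  have Qsq : ∑ i ∈ Finset.range (n+1), (lam i)^2 • q i
      = Φ (∑ i ∈ Finset.range (n+1), (lam i)^2 • p i) := by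
    calc ∑ i ∈ Finset.range (n+1), (lam i)^2 • q i
        = ∑ i ∈ Finset.range (n+1), Φ ((lam i)^2 • p i) :=
          Finset.sum_congr rfl fun i _ => (hsmul ((lam i)^2) (p i) (hpsa i)).symm
      _ = Φ (∑ i ∈ Finset.range (n+1), (lam i)^2 • p i) :=
          (map_sum' Φ hadd hsmul _ _ fun i _ =>
            (IsSelfAdjoint.all ((lam i)^2)).smul (hpsa i)).symm
  calc Φ x * Φ x
      = (∑ i ∈ Finset.range (n+1), lam i • q i) * (∑ i ∈ Finset.range (n+1), lam i • q i) := by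
        rw [Qb]
    _ ≤ ∑ i ∈ Finset.range (n+1), (lam i)^2 • q i := jensen_sq _ q lam hqnn Q1
    _ = Φ (∑ i ∈ Finset.range (n+1), (lam i)^2 • p i) := Qsq
    _ ≤ Φ (x * x + δ^2 • 1) := by
        refine mono' Φ hadd hsmul hpos _ _ ?_ ?_ P3
        · exact sa_sum _ _ fun i _ => (IsSelfAdjoint.all ((lam i)^2)).smul (hpsa i)
        · exact (sa_mul_self' hx).add ((IsSelfAdjoint.all (δ^2)).smul (IsSelfAdjoint.one A))
    _ = Φ (x * x) + δ^2 • 1 := by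
        rw [hadd (x*x) (δ^2 • 1) (sa_mul_self' hx)
          ((IsSelfAdjoint.all (δ^2)).smul (IsSelfAdjoint.one A)),
          hsmul (δ^2) 1 (IsSelfAdjoint.one A), hone]
    _ ≤ Φ (x * x) + ε • 1 := by
        have hd : δ^2 • (1:B) ≤ ε • 1 := by
          have h0 : (0:B) ≤ (ε - δ^2) • (1:B) := my_smul_nonneg (by linarith) honeB
          have : (ε - δ^2) • (1:B) = ε • 1 - δ^2 • 1 := by rw [sub_smul]
          rw [this] at h0
          exact sub_nonneg.mp h0
        exact add_le_add le_rfl hd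
end maps


section order
variable {B : Type*} [CStarAlgebra B] [PartialOrder B] [StarOrderedRing B]

lemma inv_facts (y : B) (hy : 0 ≤ y) (hyu : IsUnit y) :
    ∃ z : B, z * y = 1 ∧ y * z = 1 ∧ IsSelfAdjoint z ∧ 0 ≤ z := by
  have hysa := IsSelfAdjoint.of_nonneg hy
  set z : B := ↑hyu.unit⁻¹ with hzdef
  have hz1 : z * y = 1 := by
    have := hyu.unit.inv_mul
    rwa [hyu.unit_spec] at this
  have hz2 : y * z = 1 := by
    have := hyu.unit.mul_inv
    rwa [hyu.unit_spec] at this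
  have hzsa : IsSelfAdjoint z := by
    have h3 : star z * y = 1 := by
      rw [← hysa.star_eq, ← star_mul, hz2, star_one]
    rw [isSelfAdjoint_iff]
    calc star z = star z * (y * z) := by rw [hz2, mul_one]
      _ = (star z * y) * z := by rw [mul_assoc]
      _ = z := by rw [h3, one_mul]
  have hznn : 0 ≤ z := by
    have h4 := hzsa.conjugate_nonneg hy
    rwa [hz1, one_mul] at h4
  exact ⟨z, hz1, hz2, hzsa, hznn⟩

variable {A : Type*} [CStarAlgebra A] [PartialOrder A] [StarOrderedRing A]

lemma backward_dir (T : A → B) (y : B) (J : A → B) (hy : 0 ≤ y) (hyu : IsUnit y)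
    (hJ : IsJordanIsoSa J) (hTx : ∀ x : A, IsSelfAdjoint x → T x = y * J x * y) :
    ∀ x : A, IsSelfAdjoint x → (0 ≤ x ↔ 0 ≤ T x) := by
  obtain ⟨z, hz1, hz2, hzsa, hznn⟩ := inv_facts y hy hyu
  obtain ⟨hbij, hadd, hsmul, hmul⟩ := hJ
  have hysa := IsSelfAdjoint.of_nonneg hy
  intro x hx
  constructor
  · intro hx0
    rw [hTx x hx]
    have hs0 : 0 ≤ CFC.sqrt x := CFC.sqrt_nonneg _
    set s := CFC.sqrt x with hsdef
    have hssa := IsSelfAdjoint.of_nonneg hs0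
    have hss : s * s = x := CFC.sqrt_mul_sqrt_self x hx0
    have hJx : J x = J s * J s := by rw [← hss]; exact jordan_sq hmul hssa
    rw [hJx]
    have hJs_sa : IsSelfAdjoint (J s) := hbij.mapsTo (show s ∈ _ from hssa)
    have key : y * (J s * J s) * y = star (J s * y) * (J s * y) := by
      rw [star_mul, hJs_sa.star_eq, hysa.star_eq]
      noncomm_ring
    rw [key]
    exact star_mul_self_nonneg _
  · intro hT0
    have hJx : 0 ≤ J x := by
      have hfx : J x = z * T x * z := by
        rw [hTx x hx, show z * (y * J x * y) * z = (z*y) * J x * (y*z) from by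
          noncomm_ring, hz1, hz2, one_mul, mul_one]
      rw [hTx x hx] at hT0
      rw [hfx, hTx x hx]
      exact hzsa.conjugate_nonneg hT0
    have hs0 : 0 ≤ CFC.sqrt (J x) := CFC.sqrt_nonneg _
    set s := CFC.sqrt (J x) with hsdef
    have hssa := IsSelfAdjoint.of_nonneg hs0
    obtain ⟨u, hu, hJu⟩ := hbij.surjOn (show s ∈ _ from hssa)
    have hu' : IsSelfAdjoint u := hu
    have hJuu : J (u*u) = J x := by
      rw [jordan_sq hmul hu', hJu]
      exact CFC.sqrt_mul_sqrt_self _ hJx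
    have huu : u * u = x :=
      hbij.injOn (show u*u ∈ _ from sa_mul_self' hu') hx hJuu
    rw [← huu]
    have := star_mul_self_nonneg u
    rwa [hu'.star_eq] at this
end order


section fwd
variable {A B : Type*} [CStarAlgebra A] [PartialOrder A] [StarOrderedRing A]
  [CStarAlgebra B] [PartialOrder B] [StarOrderedRing B]

theorem forward_dir (T : A → B)
    (hbij : Set.BijOn T {x : A | IsSelfAdjoint x} {y : B | IsSelfAdjoint y})
    (hadd : ∀ x y : A, IsSelfAdjoint x → IsSelfAdjoint y → T (x + y) = T x + T y)
    (hsmul : ∀ (t : ℝ) (x : A), IsSelfAdjoint x → T (t • x) = t • T x)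
    (hpos : ∀ x : A, IsSelfAdjoint x → (0 ≤ x ↔ 0 ≤ T x)) :
    ∃ (y : B) (J : A → B), 0 ≤ y ∧ IsUnit y ∧ IsJordanIsoSa J ∧
      (∀ x : A, IsSelfAdjoint x → T x = y * J x * y) := by
  have hposm : ∀ x : A, IsSelfAdjoint x → 0 ≤ x → 0 ≤ T x := fun x hx h => (hpos x hx).mp h
  obtain hB | hB := subsingleton_or_nontrivial B
  · -- trivial case
    have h01 : (0 : A) = 1 := hbij.injOn (show (0:A) ∈ _ from IsSelfAdjoint.zero A)
      (show (1:A) ∈ _ from IsSelfAdjoint.one A) (Subsingleton.elim _ _)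
    haveI : Subsingleton A := subsingleton_of_zero_eq_one h01
    exact ⟨1, T, le_of_eq (Subsingleton.elim _ _), isUnit_one,
      ⟨hbij, hadd, hsmul, fun x y _ _ => Subsingleton.elim _ _⟩,
      fun x _ => Subsingleton.elim _ _⟩
  -- nontrivial case
  have honeB : (0 : B) ≤ 1 := by simpa using star_mul_self_nonneg (1 : B)
  have sa1A : IsSelfAdjoint (1 : A) := IsSelfAdjoint.one A
  have hT1sa : IsSelfAdjoint (T 1) := hbij.mapsTo (show (1:A) ∈ _ from sa1A)
  have hone_nnA : (0 : A) ≤ 1 := by simpa using star_mul_self_nonneg (1 : A)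
  have hT1pos : 0 ≤ T 1 := (hpos 1 sa1A).mp hone_nnA
  obtain ⟨a, ha, haT⟩ := hbij.surjOn (show (1:B) ∈ _ from IsSelfAdjoint.one B)
  have ha' : IsSelfAdjoint a := ha
  have hane : a ≠ 0 := by
    intro h
    rw [h, map_zero' T hsmul] at haT
    exact one_ne_zero haT.symm
  have hc : (0:ℝ) < ‖a‖ := norm_pos_iff.mpr hane
  have hstep : (1:B) ≤ ‖a‖ • T 1 := by
    have h1 : a ≤ ‖a‖ • 1 := by
      have := ha'.le_algebraMap_norm_self
      rwa [Algebra.algebraMap_eq_smul_one] at this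
    have h2 := mono' T hadd hsmul hposm a (‖a‖ • 1)
      ha' ((IsSelfAdjoint.all ‖a‖).smul sa1A) h1
    rwa [haT, hsmul ‖a‖ 1 sa1A] at h2
  have hlow : ‖a‖⁻¹ • (1:B) ≤ T 1 := by
    have h3 : (0:B) ≤ ‖a‖ • T 1 - 1 := sub_nonneg.mpr hstep
    have h4 := my_smul_nonneg (inv_nonneg.mpr hc.le) h3
    rw [smul_sub, smul_smul, inv_mul_cancel₀ hc.ne', one_smul] at h4
    exact sub_nonneg.mp h4
  have hsmall_unit : IsUnit (‖a‖⁻¹ • (1:B)) := by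
    refine isUnit_iff_exists.mpr ⟨‖a‖ • 1, ?_, ?_⟩ <;>
      rw [smul_mul_assoc, one_mul, smul_smul] <;>
      [rw [inv_mul_cancel₀ hc.ne', one_smul]; rw [mul_inv_cancel₀ hc.ne', one_smul]]
  have hT1unit : IsUnit (T 1) :=
    CStarAlgebra.isUnit_of_le _ hlow
      (IsStrictlyPositive.iff_of_unital.mpr ⟨my_smul_nonneg (inv_nonneg.mpr hc.le) honeB, hsmall_unit⟩)
  -- square root
  set y : B := CFC.sqrt (T 1) with hydef
  have hy : 0 ≤ y := CFC.sqrt_nonneg _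
  have hysa := IsSelfAdjoint.of_nonneg hy
  have hysq : y * y = T 1 := CFC.sqrt_mul_sqrt_self _ hT1pos
  have hyu : IsUnit y := by
    obtain ⟨v, hv1, hv2⟩ := isUnit_iff_exists.mp hT1unit
    have hyR : y * (y * v) = 1 := by rw [← mul_assoc, hysq, hv1]
    have hyL : (v * y) * y = 1 := by rw [mul_assoc, hysq, hv2]
    have heq : v * y = y * v := by
      calc v * y = (v * y) * (y * (y * v)) := by rw [hyR, mul_one]
        _ = ((v * y) * y) * (y * v) := by noncomm_ring
        _ = y * v := by rw [hyL, one_mul]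
    exact isUnit_iff_exists.mpr ⟨y * v, hyR, by rw [← heq, hyL]⟩
  obtain ⟨z, hz1, hz2, hzsa, hznn⟩ := inv_facts y hy hyu
  -- the Jordan map
  set J : A → B := fun x => z * T x * z with hJdef
  have hTsa : ∀ x : A, IsSelfAdjoint x → IsSelfAdjoint (T x) := fun x hx =>
    hbij.mapsTo (show x ∈ _ from hx)
  have hJsa : ∀ x : A, IsSelfAdjoint x → IsSelfAdjoint (J x) := by
    intro x hx
    rw [hJdef]
    rw [isSelfAdjoint_iff, star_mul, star_mul, hzsa.star_eq, (hTsa x hx).star_eq]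
    simp [mul_assoc]
  have hTyJy : ∀ x : A, T x = y * J x * y := by
    intro x
    rw [hJdef]
    show T x = y * (z * T x * z) * y
    rw [show y * (z * T x * z) * y = (y*z) * T x * (z*y) from by noncomm_ring,
      hz1, hz2, one_mul, mul_one]
  have hJadd : ∀ x x' : A, IsSelfAdjoint x → IsSelfAdjoint x' →
      J (x + x') = J x + J x' := by
    intro x x' hx hx'
    rw [hJdef]
    show z * T (x+x') * z = z * T x * z + z * T x' * z
    rw [hadd x x' hx hx']
    noncomm_ring
  have hJsmul : ∀ (t : ℝ) (x : A), IsSelfAdjoint x → J (t • x) = t • J x := by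
    intro t x hx
    rw [hJdef]
    show z * T (t • x) * z = t • (z * T x * z)
    rw [hsmul t x hx, mul_smul_comm, smul_mul_assoc]
  have hJone : J 1 = 1 := by
    rw [hJdef]
    show z * T 1 * z = 1
    rw [← hysq, show z * (y*y) * z = (z*y)*(y*z) from by noncomm_ring, hz1, hz2, one_mul]
  have hJpos : ∀ x : A, IsSelfAdjoint x → (0 ≤ x ↔ 0 ≤ J x) := by
    intro x hx
    rw [hpos x hx]
    constructor
    · intro h
      rw [hJdef]
      exact hzsa.conjugate_nonneg h
    · intro h
      have := hysa.conjugate_nonneg h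
      rwa [← hTyJy x] at this
  have hJposm : ∀ x : A, IsSelfAdjoint x → 0 ≤ x → 0 ≤ J x := fun x hx h =>
    (hJpos x hx).mp h
  have hJbij : Set.BijOn J {x : A | IsSelfAdjoint x} {y : B | IsSelfAdjoint y} := by
    refine ⟨fun x hx => hJsa x hx, ?_, ?_⟩
    · intro x hx x' hx' hJ
      refine hbij.injOn hx hx' ?_
      rw [hTyJy x, hTyJy x', hJ]
    · intro b hb
      have hb' : IsSelfAdjoint b := hb
      have hw : IsSelfAdjoint (y * b * y) := by
        rw [isSelfAdjoint_iff, star_mul, star_mul, hysa.star_eq, hb'.star_eq]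
        simp [mul_assoc]
      obtain ⟨x, hx, hTx⟩ := hbij.surjOn (show y * b * y ∈ _ from hw)
      refine ⟨x, hx, ?_⟩
      show J x = b
      rw [hJdef]
      show z * T x * z = b
      rw [hTx, show z * (y*b*y) * z = (z*y)*b*(y*z) from by noncomm_ring,
        hz1, hz2, one_mul, mul_one]
  -- inverse of J
  have hJsurj : ∀ b : B, IsSelfAdjoint b → ∃ x : A, IsSelfAdjoint x ∧ J x = b := by
    intro b hb
    obtain ⟨x, hx, hJx⟩ := hJbij.surjOn (show b ∈ _ from hb)
    exact ⟨x, hx, hJx⟩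
  classical
  set Ji : B → A := fun b =>
    if hb : IsSelfAdjoint b then (hJsurj b hb).choose else 0 with hJidef
  have hJiJ : ∀ b : B, (hb : IsSelfAdjoint b) → IsSelfAdjoint (Ji b) ∧ J (Ji b) = b := by
    intro b hb
    rw [hJidef]
    simp only [dif_pos hb]
    exact ⟨(hJsurj b hb).choose_spec.1, (hJsurj b hb).choose_spec.2⟩
  have hJisa : ∀ b : B, IsSelfAdjoint b → IsSelfAdjoint (Ji b) := fun b hb => (hJiJ b hb).1
  have hJJi : ∀ b : B, IsSelfAdjoint b → J (Ji b) = b := fun b hb => (hJiJ b hb).2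
  have hJiJx : ∀ x : A, IsSelfAdjoint x → Ji (J x) = x := by
    intro x hx
    have h1 : IsSelfAdjoint (J x) := hJsa x hx
    exact hJbij.injOn (show Ji (J x) ∈ _ from hJisa _ h1) hx (hJJi _ h1)
  have hJiadd : ∀ b b' : B, IsSelfAdjoint b → IsSelfAdjoint b' →
      Ji (b + b') = Ji b + Ji b' := by
    intro b b' hb hb'
    refine hJbij.injOn (show _ ∈ _ from hJisa _ (hb.add hb'))
      (show _ ∈ _ from (hJisa _ hb).add (hJisa _ hb')) ?_
    rw [hJJi _ (hb.add hb'), hJadd _ _ (hJisa _ hb) (hJisa _ hb'),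
      hJJi _ hb, hJJi _ hb']
  have hJismul : ∀ (t : ℝ) (b : B), IsSelfAdjoint b → Ji (t • b) = t • Ji b := by
    intro t b hb
    refine hJbij.injOn (show _ ∈ _ from hJisa _ ((IsSelfAdjoint.all t).smul hb))
      (show _ ∈ _ from (IsSelfAdjoint.all t).smul (hJisa _ hb)) ?_
    rw [hJJi _ ((IsSelfAdjoint.all t).smul hb), hJsmul t _ (hJisa _ hb), hJJi _ hb]
  have hJione : Ji 1 = 1 := by
    refine hJbij.injOn (show _ ∈ _ from hJisa _ (IsSelfAdjoint.one B))
      (show _ ∈ _ from IsSelfAdjoint.one A) ?_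
    rw [hJJi _ (IsSelfAdjoint.one B), hJone]
  have hJiposm : ∀ b : B, IsSelfAdjoint b → 0 ≤ b → 0 ≤ Ji b := by
    intro b hb h
    have := hJJi b hb
    exact (hJpos (Ji b) (hJisa b hb)).mpr (by rwa [this])
  -- Kadison both directions
  have K1 : ∀ x : A, IsSelfAdjoint x → J x * J x ≤ J (x * x) := fun x hx =>
    kadison_ineq J hJadd hJsmul hJone hJposm hx
  have K2 : ∀ b : B, IsSelfAdjoint b → Ji b * Ji b ≤ Ji (b * b) := fun b hb =>
    kadison_ineq Ji hJiadd hJismul hJione hJiposm hb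
  have hJsq : ∀ x : A, IsSelfAdjoint x → J (x * x) = J x * J x := by
    intro x hx
    refine le_antisymm ?_ (K1 x hx)
    have h1 := K2 (J x) (hJsa x hx)
    rw [hJiJx x hx] at h1
    have hJxJx : IsSelfAdjoint (J x * J x) := sa_mul_self' (hJsa x hx)
    have h2 := mono' J hJadd hJsmul hJposm (x*x) (Ji (J x * J x))
      (sa_mul_self' hx) (hJisa _ hJxJx) h1
    rwa [hJJi _ hJxJx] at h2
  have hJjordan : ∀ x x' : A, IsSelfAdjoint x → IsSelfAdjoint x' →
      J ((2 : ℝ)⁻¹ • (x * x' + x' * x)) = (2 : ℝ)⁻¹ • (J x * J x' + J x' * J x) := by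
    intro x x' hx hx'
    have hxx'sa : IsSelfAdjoint (x * x' + x' * x) := by
      rw [isSelfAdjoint_iff, star_add, star_mul, star_mul, hx.star_eq, hx'.star_eq,
        add_comm]
    rw [hJsmul _ _ hxx'sa]
    congr 1
    have hsplit : x * x' + x' * x = (x + x') * (x + x') - x*x - x'*x' := by noncomm_ring
    rw [hsplit]
    rw [map_sub' J hJadd hJsmul _ _
      (((sa_mul_self' (hx.add hx')).sub (sa_mul_self' hx)))
      (sa_mul_self' hx')]
    rw [map_sub' J hJadd hJsmul _ _ (sa_mul_self' (hx.add hx')) (sa_mul_self' hx)]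
    rw [hJsq _ (hx.add hx'), hJsq _ hx, hJsq _ hx', hJadd _ _ hx hx']
    noncomm_ring
  exact ⟨y, J, hy, hyu, ⟨hJbij, hJadd, hJsmul, hJjordan⟩, fun x _ => hTyJy x⟩
end fwd


section uniq
variable {A B : Type*} [CStarAlgebra A] [PartialOrder A] [StarOrderedRing A]
  [CStarAlgebra B] [PartialOrder B] [StarOrderedRing B]

lemma y_eq_sqrt (T : A → B) (y : B) (J : A → B) (hy : 0 ≤ y)
    (hJ : IsJordanIsoSa J) (hTx : ∀ x : A, IsSelfAdjoint x → T x = y * J x * y) :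
    y = CFC.sqrt (T 1) := by
  have hJ1 : J 1 = 1 := jordan_one hJ
  have hT1 : T 1 = y * y := by
    rw [hTx 1 (IsSelfAdjoint.one A), hJ1, mul_one]
  exact (CFC.sqrt_unique hT1.symm hy).symm
end uniq

end OIK

/-- A real-linear bijection `T` between the selfadjoint parts of unital
C*-algebras is an order isomorphism iff `T x = y * J x * y` for a positive invertible `y`
and a Jordan isomorphism `J`; the decomposition is unique and `y` is the positive square
root of `T 1`. -/

theorem order_iso_iff_Uy_jordan_decomposition
    {A B : Type*} [CStarAlgebra A] [PartialOrder A] [StarOrderedRing A]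
    [CStarAlgebra B] [PartialOrder B] [StarOrderedRing B]
    (T : A → B)
    (hbij : Set.BijOn T {x : A | IsSelfAdjoint x} {y : B | IsSelfAdjoint y})
    (hadd : ∀ x y : A, IsSelfAdjoint x → IsSelfAdjoint y → T (x + y) = T x + T y)
    (hsmul : ∀ (t : ℝ) (x : A), IsSelfAdjoint x → T (t • x) = t • T x) :
    ((∀ x : A, IsSelfAdjoint x → (0 ≤ x ↔ 0 ≤ T x)) ↔
        ∃ (y : B) (J : A → B), 0 ≤ y ∧ IsUnit y ∧ IsJordanIsoSa J ∧
          (∀ x : A, IsSelfAdjoint x → T x = y * J x * y)) ∧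
      (∀ (y₁ y₂ : B) (J₁ J₂ : A → B),
        0 ≤ y₁ → IsUnit y₁ → IsJordanIsoSa J₁ →
          (∀ x : A, IsSelfAdjoint x → T x = y₁ * J₁ x * y₁) →
        0 ≤ y₂ → IsUnit y₂ → IsJordanIsoSa J₂ →
          (∀ x : A, IsSelfAdjoint x → T x = y₂ * J₂ x * y₂) →
        y₁ = y₂ ∧ ∀ x : A, IsSelfAdjoint x → J₁ x = J₂ x) ∧
      (∀ (y : B) (J : A → B), 0 ≤ y → IsUnit y → IsJordanIsoSa J →
        (∀ x : A, IsSelfAdjoint x → T x = y * J x * y) → y = CFC.sqrt (T 1)) := by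
  refine ⟨⟨fun hpos => OIK.forward_dir T hbij hadd hsmul hpos, ?_⟩, ?_, ?_⟩
  · rintro ⟨y, J, hy, hyu, hJ, hTx⟩
    exact OIK.backward_dir T y J hy hyu hJ hTx
  · intro y₁ y₂ J₁ J₂ hy₁ hyu₁ hJ₁ hT₁ hy₂ hyu₂ hJ₂ hT₂
    have h₁ : y₁ = CFC.sqrt (T 1) := OIK.y_eq_sqrt T y₁ J₁ hy₁ hJ₁ hT₁
    have h₂ : y₂ = CFC.sqrt (T 1) := OIK.y_eq_sqrt T y₂ J₂ hy₂ hJ₂ hT₂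
    have hyy : y₁ = y₂ := h₁.trans h₂.symm
    refine ⟨hyy, ?_⟩
    intro x hx
    obtain ⟨z, hz1, hz2, hzsa, hznn⟩ := OIK.inv_facts y₁ hy₁ hyu₁
    have red : ∀ w : B, z * (y₁ * w * y₁) * z = w := by
      intro w
      rw [show z * (y₁ * w * y₁) * z = (z*y₁) * w * (y₁*z) from by noncomm_ring,
        hz1, hz2, one_mul, mul_one]
    have e1 : y₁ * J₁ x * y₁ = y₁ * J₂ x * y₁ := by
      rw [← hT₁ x hx, hT₂ x hx, hyy]
    calc J₁ x = z * (y₁ * J₁ x * y₁) * z := (red _).symm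
      _ = z * (y₁ * J₂ x * y₁) * z := by rw [e1]
      _ = J₂ x := red _
  · intro y J hy hyu hJ hTx
    exact OIK.y_eq_sqrt T y J hy hJ hTx
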